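/- Let ψ be a convex Archimedean generator (convexity being required of generators of Archimedean copulas). Then the function G_H defined by G_H(x) = ψ(−log H(x)) (with the convention G_H(x) = 0 where H(x) = 0) is a GEV distribution function for every GEV distribution function H if and only if there exist c > 0 and θ ≥ 1 such that ψ(t) = exp(−(ct)^{1/θ}) for all t ≥ 0. -/

import Mathlib

open Filter Set Topology

/-- The generalized extreme value (GEV) distribution function `H_{ξ,μ,σ}`. -/
noncomputable def GEVcdf (ξ μ σ : ℝ) : ℝ → ℝ := fun x =>
  if ξ = 0 then Real.exp (-Real.exp (-(x - μ) / σ))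
  else if 0 < 1 + ξ * (x - μ) / σ then Real.exp (-(1 + ξ * (x - μ) / σ) ^ (-1 / ξ))
  else if 0 < ξ then 0 else 1

/-- A distribution function is GEV if it equals some `H_{ξ,μ,σ}` with `σ > 0`. -/
def IsGEV (H : ℝ → ℝ) : Prop := ∃ ξ μ σ : ℝ, 0 < σ ∧ H = GEVcdf ξ μ σ

/-- A distribution function on `ℝ`: nondecreasing, right-continuous, with limits 0 at `-∞`
and 1 at `∞`, taking values in `[0,1]`. -/
def IsDistFun (F : ℝ → ℝ) : Prop :=
  Monotone F ∧ (∀ x, ContinuousWithinAt F (Ici x) x) ∧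
    Tendsto F atBot (nhds 0) ∧ Tendsto F atTop (nhds 1) ∧ ∀ x, F x ∈ Icc (0:ℝ) 1

/-- The properties of the diagonal `u ↦ C_n(u,…,u)` of an `n`-dimensional copula. -/
def IsCopulaDiagonal (n : ℕ) (δ : ℝ → ℝ) : Prop :=
  δ 0 = 0 ∧ δ 1 = 1 ∧ MonotoneOn δ (Icc 0 1) ∧ (∀ u ∈ Icc (0:ℝ) 1, δ u ≤ u) ∧
    ∀ u ∈ Icc (0:ℝ) 1, ∀ v ∈ Icc (0:ℝ) 1, |δ u - δ v| ≤ (n : ℝ) * |u - v|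

/-- A distribution function on `[0,1]`: nondecreasing, right-continuous, `D(0)=0`, `D(1)=1`,
with values in `[0,1]`. -/
def IsDistFun01 (D : ℝ → ℝ) : Prop :=
  D 0 = 0 ∧ D 1 = 1 ∧ MonotoneOn D (Icc 0 1) ∧
    (∀ u ∈ Ico (0:ℝ) 1, ContinuousWithinAt D (Icc u 1) u) ∧
    ∀ u ∈ Icc (0:ℝ) 1, D u ∈ Icc (0:ℝ) 1

/-- A degenerate distribution function `x ↦ 1_{[a,∞)}(x)`. -/
noncomputable def IsDegenerateDF (G : ℝ → ℝ) : Prop :=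
  ∃ a : ℝ, ∀ x, G x = if a ≤ x then 1 else 0

/-- An Archimedean generator: continuous on `[0,∞)`, `ψ(0)=1`, values in `[0,1]`,
`ψ(t) → 0` as `t → ∞`, strictly decreasing on `[0, inf{x : ψ(x)=0}]` (equivalently,
strictly decreasing as long as it is positive). -/
def IsArchimedeanGenerator (ψ : ℝ → ℝ) : Prop :=
  ContinuousOn ψ (Ici 0) ∧ ψ 0 = 1 ∧ (∀ t ∈ Ici (0:ℝ), ψ t ∈ Icc (0:ℝ) 1) ∧
    Tendsto ψ atTop (nhds 0) ∧
    ∀ s t : ℝ, 0 ≤ s → s < t → 0 < ψ s → ψ t < ψ s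

section AuxLemmas


lemma log_linear_sub (a b : ℝ) (ha : 0 < a) :
    Tendsto (fun x : ℝ => Real.log (a*x+b) - Real.log x) atTop (𝓝 (Real.log a)) := by
  have h1 : Tendsto (fun x : ℝ => a + b/x) atTop (𝓝 a) := by
    have : Tendsto (fun x : ℝ => b/x) atTop (𝓝 0) := tendsto_const_nhds.div_atTop tendsto_id
    simpa using (tendsto_const_nhds (x := a) (f := atTop)).add this
  have h2 : Tendsto (fun x : ℝ => Real.log (a + b/x)) atTop (𝓝 (Real.log a)) :=
    (Real.continuousAt_log (ne_of_gt ha)).tendsto.comp h1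
  refine h2.congr' ?_
  filter_upwards [eventually_gt_atTop 0, h1.eventually (eventually_gt_nhds ha)] with x hx hax
  have hx' : a * x + b = x * (a + b / x) := by field_simp
  rw [hx', Real.log_mul (ne_of_gt hx) (ne_of_gt hax)]
  ring

lemma log_linear_div (a b : ℝ) (ha : 0 < a) :
    Tendsto (fun x : ℝ => Real.log (a*x+b) / Real.log x) atTop (𝓝 1) := by
  have h0 : Tendsto (fun x : ℝ => (Real.log (a*x+b) - Real.log x) / Real.log x) atTop (𝓝 0) :=
    (log_linear_sub a b ha).div_atTop Real.tendsto_log_atTop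
  have h1 := (tendsto_const_nhds (x := (1:ℝ)) (f := atTop (α := ℝ))).add h0
  rw [add_zero] at h1
  refine h1.congr' ?_
  filter_upwards [eventually_gt_atTop 1] with x hx
  have hlx : Real.log x ≠ 0 := ne_of_gt (Real.log_pos hx)
  field_simp
  ring

lemma log_loglinear_div (a b : ℝ) (ha : 0 < a) :
    Tendsto (fun x : ℝ => Real.log (a*Real.log x+b) / Real.log x) atTop (𝓝 0) := by
  have key : Tendsto (fun u : ℝ => Real.log (a*u+b) / u) atTop (𝓝 0) := by
    have h1 : Tendsto (fun u : ℝ => Real.log u / u) atTop (𝓝 0) :=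
      Real.isLittleO_log_id_atTop.tendsto_div_nhds_zero
    have h2 : Tendsto (fun u : ℝ => (Real.log (a*u+b) - Real.log u) / u) atTop (𝓝 0) :=
      (log_linear_sub a b ha).div_atTop tendsto_id
    have h3 := h1.add h2
    rw [add_zero] at h3
    refine h3.congr' ?_
    filter_upwards [eventually_ne_atTop 0] with u hu
    field_simp
    ring
  exact key.comp Real.tendsto_log_atTop

lemma slope_exp : Tendsto (fun s : ℝ => (1 - Real.exp (-s))/s) (𝓝[>] 0) (𝓝 1) := by
  have hd : HasDerivAt (fun s : ℝ => 1 - Real.exp (-s)) 1 0 := by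
    have h0 : HasDerivAt (fun s : ℝ => Real.exp (-s)) (-1) 0 := by
      have := (Real.hasDerivAt_exp (-0)).comp 0 (hasDerivAt_neg 0)
      simpa [Function.comp_def] using this
    simpa using h0.const_sub 1
  have h2 := hasDerivWithinAt_iff_tendsto_slope.mp (hd.hasDerivWithinAt (s := Ioi (0:ℝ)))
  have h3 : Tendsto (slope (fun s : ℝ => 1 - Real.exp (-s)) 0) (𝓝[>] 0) (𝓝 1) := by
    refine h2.mono_left (nhdsWithin_mono _ ?_)
    intro x hx
    exact ⟨hx, ne_of_gt hx⟩
  refine h3.congr' ?_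
  filter_upwards [self_mem_nhdsWithin] with s hs
  simp [slope_def_field]

lemma rpow_tendsto_zero_right (c α : ℝ) (hc : 0 < c) (hα : 0 < α) :
    Tendsto (fun t : ℝ => (c*t) ^ α) (𝓝[>] 0) (𝓝[>] 0) := by
  have hct : Tendsto (fun t : ℝ => c*t) (𝓝[>] 0) (𝓝[>] 0) := by
    refine tendsto_nhdsWithin_of_tendsto_nhds_of_eventually_within _ ?_ ?_
    · have : Tendsto (fun t : ℝ => c*t) (𝓝 0) (𝓝 0) := by
        simpa using (continuous_mul_left c).tendsto 0
      exact this.mono_left nhdsWithin_le_nhds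
    · filter_upwards [self_mem_nhdsWithin] with t ht
      exact mul_pos hc ht
  have hpow : Tendsto (fun u : ℝ => u ^ α) (𝓝[>] 0) (𝓝[>] 0) := by
    refine tendsto_nhdsWithin_of_tendsto_nhds_of_eventually_within _ ?_ ?_
    · have hlog : Tendsto (fun u : ℝ => Real.exp (Real.log u * α)) (𝓝[>] 0) (𝓝 0) := by
        refine Real.tendsto_exp_atBot.comp ?_
        exact (Real.tendsto_log_nhdsGT_zero.atBot_mul_const hα)
      refine hlog.congr' ?_
      filter_upwards [self_mem_nhdsWithin] with u hu
      rw [Real.rpow_def_of_pos hu]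
    · filter_upwards [self_mem_nhdsWithin] with u hu
      exact Real.rpow_pos_of_pos hu α
  exact hpow.comp hct

lemma theta_ge_one (ψ : ℝ → ℝ) (c σ : ℝ) (hc : 0 < c) (hσ : 0 < σ)
    (hform : ∀ t : ℝ, 0 ≤ t → ψ t = Real.exp (-((c*t) ^ ((1:ℝ)/σ))))
    (hconv : ConvexOn ℝ (Ici 0) ψ) : 1 ≤ σ := by
  by_contra hlt
  push_neg at hlt
  set α : ℝ := 1/σ with hα
  have hα1 : 1 < α := by
    rw [hα, lt_div_iff₀ hσ]; linarith
  have hα0 : 0 < α := by linarith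
  have hψ0 : ψ 0 = 1 := by
    rw [hform 0 le_rfl]
    simp [Real.zero_rpow (ne_of_gt hα0)]
  have hs2 : ∀ t : ℝ, 0 < t → (c*(2*t)) ^ α = (2:ℝ)^α * (c*t) ^ α := by
    intro t ht
    have h : c*(2*t) = 2*(c*t) := by ring
    rw [h, Real.mul_rpow (by norm_num) (by positivity)]
  have hkey : ∀ t : ℝ, 0 < t →
      Real.exp (-((c*t) ^ α)) ≤ 1/2 + 1/2 * Real.exp (-((2:ℝ)^α * (c*t) ^ α)) := by
    intro t ht
    have h := hconv.2 (x := 0) (y := 2*t) (le_refl (0:ℝ) : (0:ℝ) ∈ Ici 0)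
      (by positivity : (0:ℝ) ≤ 2*t) (by norm_num : (0:ℝ) ≤ (1:ℝ)/2)
      (by norm_num : (0:ℝ) ≤ (1:ℝ)/2) (by norm_num)
    simp only [smul_eq_mul] at h
    have hmid : (1/2:ℝ) * 0 + (1/2:ℝ)*(2*t) = t := by ring
    rw [hmid, hform t ht.le, hform (2*t) (by positivity), hψ0, hs2 t ht] at h
    linarith
  have hD : ∀ᶠ t in 𝓝[>] (0:ℝ), 0 ≤ (1 - Real.exp (-((c*t)^α)))/((c*t)^α)
      - (2:ℝ)^(α-1) * ((1 - Real.exp (-((c*(2*t))^α)))/((c*(2*t))^α)) := by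
    filter_upwards [self_mem_nhdsWithin] with t ht
    have hs1pos : 0 < (c*t)^α := Real.rpow_pos_of_pos (mul_pos hc ht) α
    have h2p : (0:ℝ) < (2:ℝ)^α := Real.rpow_pos_of_pos (by norm_num) α
    have h2α : (2:ℝ)^(α-1) = (2:ℝ)^α / 2 := by
      rw [Real.rpow_sub (by norm_num), Real.rpow_one]
    rw [hs2 t ht, h2α]
    have hnum : (2:ℝ)^α / 2 * ((1 - Real.exp (-((2:ℝ)^α * (c*t)^α)))/((2:ℝ)^α * (c*t)^α))
        = 1/2 * (1 - Real.exp (-((2:ℝ)^α * (c*t)^α))) / ((c*t)^α) := by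
      field_simp
    rw [hnum, ← sub_div]
    have hk := hkey t ht
    exact div_nonneg (by linarith) hs1pos.le
  have hlim : Tendsto (fun t : ℝ => (1 - Real.exp (-((c*t)^α)))/((c*t)^α)
      - (2:ℝ)^(α-1) * ((1 - Real.exp (-((c*(2*t))^α)))/((c*(2*t))^α))) (𝓝[>] 0)
      (𝓝 (1 - (2:ℝ)^(α-1) * 1)) := by
    have l1 : Tendsto (fun t : ℝ => (1 - Real.exp (-((c*t)^α)))/((c*t)^α)) (𝓝[>] 0) (𝓝 1) :=
      slope_exp.comp (rpow_tendsto_zero_right c α hc hα0)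
    have hmap2 : Tendsto (fun t : ℝ => (c*(2*t))^α) (𝓝[>] 0) (𝓝[>] 0) := by
      have h := rpow_tendsto_zero_right (2*c) α (by positivity) hα0
      refine h.congr ?_
      intro t
      ring_nf
    have l2 : Tendsto (fun t : ℝ => (1 - Real.exp (-((c*(2*t))^α)))/((c*(2*t))^α)) (𝓝[>] 0) (𝓝 1) :=
      slope_exp.comp hmap2
    exact l1.sub (tendsto_const_nhds.mul l2)
  have hfin : (0:ℝ) ≤ 1 - (2:ℝ)^(α-1) * 1 := ge_of_tendsto hlim hD
  have h2big : (1:ℝ) < (2:ℝ)^(α-1) := by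
    refine (Real.one_lt_rpow_iff_of_pos (by norm_num)).mpr ?_
    exact Or.inl ⟨by norm_num, by linarith⟩
  linarith

lemma gev_pos_branch {ξ μ σ : ℝ} (hξ : ξ ≠ 0) {x : ℝ} (hA : 0 < 1 + ξ * (x - μ) / σ) :
    GEVcdf ξ μ σ x = Real.exp (-(1 + ξ * (x - μ) / σ) ^ (-1 / ξ)) := by
  simp only [GEVcdf]
  rw [if_neg hξ, if_pos hA]

lemma gev_nonpos_branch {ξ μ σ : ℝ} (hξ : ξ ≠ 0) {x : ℝ} (hA : ¬ 0 < 1 + ξ * (x - μ) / σ) :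
    GEVcdf ξ μ σ x = if 0 < ξ then 0 else 1 := by
  simp only [GEVcdf]
  rw [if_neg hξ, if_neg hA]

lemma gev_zero_branch {μ σ : ℝ} (x : ℝ) :
    GEVcdf 0 μ σ x = Real.exp (-Real.exp (-(x - μ) / σ)) := by
  simp [GEVcdf]

lemma mpr_dir (ψ : ℝ → ℝ) (c θ : ℝ) (hc : 0 < c) (hθ : 1 ≤ θ)
    (hform : ∀ t : ℝ, 0 ≤ t → ψ t = Real.exp (-((c * t) ^ ((1:ℝ) / θ)))) :
    ∀ H : ℝ → ℝ, IsGEV H →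
      IsGEV (fun x => if H x = 0 then 0 else ψ (-Real.log (H x))) := by
  have hθ0 : 0 < θ := lt_of_lt_of_le one_pos hθ
  rintro H ⟨ξ, μ, σ, hσ, rfl⟩
  by_cases hξ : ξ = 0
  · subst hξ
    refine ⟨0, μ + σ * Real.log c, σ * θ, by positivity, ?_⟩
    funext x
    rw [gev_zero_branch x, gev_zero_branch x]
    rw [if_neg (Real.exp_ne_zero _)]
    rw [Real.log_exp, neg_neg]
    rw [hform _ (Real.exp_pos _).le]
    congr 1
    have hpos : 0 < c * Real.exp (-(x - μ) / σ) := by positivity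
    rw [Real.rpow_def_of_pos hpos, Real.log_mul (ne_of_gt hc) (Real.exp_ne_zero _),
      Real.log_exp]
    congr 1
    field_simp
    ring
  · set P : ℝ := c ^ ξ with hPdef
    have hP : 0 < P := Real.rpow_pos_of_pos hc ξ
    refine ⟨ξ * θ, μ + σ * (P - 1) / ξ, σ * θ * P, by positivity, ?_⟩
    funext x
    have hξθ : ξ * θ ≠ 0 := mul_ne_zero hξ (ne_of_gt hθ0)
    have hA' : 1 + (ξ * θ) * (x - (μ + σ * (P - 1) / ξ)) / (σ * θ * P)
        = (1 + ξ * (x - μ) / σ) / P := by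
      field_simp
      ring
    by_cases hA : 0 < 1 + ξ * (x - μ) / σ
    · have hA'pos : 0 < 1 + (ξ * θ) * (x - (μ + σ * (P - 1) / ξ)) / (σ * θ * P) := by
        rw [hA']; positivity
      rw [gev_pos_branch hξ hA, gev_pos_branch hξθ hA'pos, hA']
      rw [if_neg (Real.exp_ne_zero _), Real.log_exp, neg_neg]
      set A : ℝ := 1 + ξ * (x - μ) / σ with hAdef
      have hApow : (0:ℝ) < A ^ (-1 / ξ) := Real.rpow_pos_of_pos hA _
      rw [hform _ hApow.le]
      congr 1
      -- (c * A ^ (-1/ξ)) ^ (1/θ) = (A / P) ^ (-1/(ξ*θ))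
      rw [Real.mul_rpow hc.le hApow.le]
      have e1 : (A ^ (-1/ξ)) ^ ((1:ℝ)/θ) = A ^ (-1/(ξ*θ)) := by
        rw [← Real.rpow_mul hA.le]
        congr 1
        field_simp
      have e2 : P ^ ((-1:ℝ)/(ξ*θ)) = c ^ ((-1:ℝ)/θ) := by
        rw [hPdef, ← Real.rpow_mul hc.le]
        congr 1
        field_simp
      rw [Real.div_rpow hA.le hP.le, e1, e2]
      rw [show (-1:ℝ)/θ = -(1/θ) by ring, Real.rpow_neg hc.le, div_inv_eq_mul, mul_comm]
    · have hA'neg : ¬ 0 < 1 + (ξ * θ) * (x - (μ + σ * (P - 1) / ξ)) / (σ * θ * P) := by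
        rw [hA']
        intro hcontra
        refine hA ?_
        have h := mul_pos hcontra hP
        rwa [div_mul_cancel₀ _ (ne_of_gt hP)] at h
      rw [gev_nonpos_branch hξ hA, gev_nonpos_branch hξθ hA'neg]
      rcases lt_trichotomy ξ 0 with hξneg | h0 | hξpos
      · rw [if_neg (not_lt.2 hξneg.le), if_neg (not_lt.2 (mul_neg_of_neg_of_pos hξneg hθ0).le)]
        rw [if_neg one_ne_zero, Real.log_one, neg_zero, hform 0 le_rfl]
        simp [Real.zero_rpow (by positivity : (1:ℝ)/θ ≠ 0)]
        exact Real.zero_rpow (by positivity)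
      · exact absurd h0 hξ
      · rw [if_pos hξpos, if_pos (by positivity : 0 < ξ * θ)]
        simp

lemma GEV_eq_zero {ξ μ σ x : ℝ} (h : GEVcdf ξ μ σ x = 0) :
    0 < ξ ∧ ¬ (0 < 1 + ξ * (x - μ) / σ) := by
  simp only [GEVcdf] at h
  split_ifs at h with h1 h2 h3
  · exact absurd h (Real.exp_ne_zero _)
  · exact absurd h (Real.exp_ne_zero _)
  · exact ⟨h3, h2⟩
  · exact absurd h one_ne_zero

lemma mp_dir (ψ : ℝ → ℝ) (hψ : IsArchimedeanGenerator ψ)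
    (hyp : ∀ H : ℝ → ℝ, IsGEV H →
      IsGEV (fun x => if H x = 0 then 0 else ψ (-Real.log (H x)))) :
    ∃ c σ : ℝ, 0 < c ∧ 0 < σ ∧ ∀ t : ℝ, 0 ≤ t → ψ t = Real.exp (-((c * t) ^ ((1:ℝ) / σ))) := by
  obtain ⟨hcont, hψ0, hrange, htend, hdec⟩ := hψ
  -- Step 1 : apply to the standard Gumbel distribution
  obtain ⟨ξ, μ, σ, hσ, hEq1⟩ := hyp (GEVcdf 0 0 1) ⟨0, 0, 1, one_pos, rfl⟩
  have hH1 : ∀ x : ℝ, GEVcdf 0 0 1 x = Real.exp (-Real.exp (-x)) := by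
    intro x; rw [gev_zero_branch]; norm_num
  have hkey1 : ∀ x : ℝ, ψ (Real.exp (-x)) = GEVcdf ξ μ σ x := by
    intro x
    have h := congrFun hEq1 x
    rwa [hH1 x, if_neg (Real.exp_ne_zero _), Real.log_exp, neg_neg] at h
  have hstar : ∀ t : ℝ, 0 < t → ψ t = GEVcdf ξ μ σ (-Real.log t) := by
    intro t ht
    have h := hkey1 (-Real.log t)
    rwa [neg_neg, Real.exp_log ht] at h
  have hψlt1 : ∀ t : ℝ, 0 < t → ψ t < 1 := by
    intro t ht
    have := hdec 0 t le_rfl ht (by rw [hψ0]; norm_num)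
    rwa [hψ0] at this
  -- Step 2 : ξ is not negative
  have hξ0 : 0 ≤ ξ := by
    by_contra hcon
    push_neg at hcon
    set x₀ : ℝ := μ - σ/ξ with hx₀
    have hξne : ξ ≠ 0 := ne_of_lt hcon
    have hσne : σ ≠ 0 := ne_of_gt hσ
    have hA : 1 + ξ * (x₀ - μ)/σ = 0 := by
      rw [hx₀]; field_simp; ring
    have hval : GEVcdf ξ μ σ x₀ = 1 := by
      rw [gev_nonpos_branch (ne_of_lt hcon) (by rw [hA]; exact lt_irrefl 0)]
      rw [if_neg (not_lt.2 hcon.le)]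
    have h1 := hkey1 x₀
    rw [hval] at h1
    exact absurd h1 (ne_of_lt (hψlt1 _ (Real.exp_pos _)))
  -- Step 3 : ξ is not positive (via the Fréchet distribution)
  have hξnpos : ¬ 0 < ξ := by
    intro hξp
    have hξ : ξ ≠ 0 := ne_of_gt hξp
    obtain ⟨ξ₂, μ₂, σ₂, hσ₂, hEq2⟩ := hyp (GEVcdf 1 1 1) ⟨1, 1, 1, one_pos, rfl⟩
    have hH20 : GEVcdf 1 1 1 0 = 0 := by
      rw [gev_nonpos_branch one_ne_zero (by norm_num)]
      norm_num
    have h0 := congrFun hEq2 0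
    rw [hH20, if_pos rfl] at h0
    have hξ₂ : 0 < ξ₂ := (GEV_eq_zero h0.symm).1
    have hpt : ∀ x : ℝ, 0 < x → ψ x⁻¹ = GEVcdf ξ₂ μ₂ σ₂ x := by
      intro x hx
      have h := congrFun hEq2 x
      have e : (1:ℝ) + 1*(x-1)/1 = x := by ring
      have hH2x : GEVcdf 1 1 1 x = Real.exp (-(x ^ (-(1:ℝ)))) := by
        rw [gev_pos_branch one_ne_zero (by rw [e]; exact hx)]
        rw [e]
        norm_num
      rwa [hH2x, if_neg (Real.exp_ne_zero _), Real.log_exp, neg_neg,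
        Real.rpow_neg_one] at h
    -- eventual positivity of the two linear arguments
    have hA2top : Tendsto (fun x : ℝ => 1 + ξ₂ * (x - μ₂)/σ₂) atTop atTop := by
      have l1 : Tendsto (fun x : ℝ => x - μ₂) atTop atTop :=
        (tendsto_atTop_add_const_right atTop (-μ₂) tendsto_id).congr
          (fun x => (sub_eq_add_neg x μ₂).symm)
      have l2 : Tendsto (fun x : ℝ => ξ₂ * (x - μ₂)/σ₂) atTop atTop := by
        have := l1.atTop_mul_const (div_pos hξ₂ hσ₂)
        refine this.congr fun x => ?_
        ring
      exact tendsto_atTop_add_const_left atTop 1 l2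
    have hBtop : Tendsto (fun x : ℝ => 1 + ξ * (Real.log x - μ)/σ) atTop atTop := by
      have l1 : Tendsto (fun u : ℝ => u - μ) atTop atTop :=
        (tendsto_atTop_add_const_right atTop (-μ) tendsto_id).congr
          (fun x => (sub_eq_add_neg x μ).symm)
      have l2 : Tendsto (fun u : ℝ => ξ * (u - μ)/σ) atTop atTop := by
        have := l1.atTop_mul_const (div_pos hξp hσ)
        refine this.congr fun x => ?_
        ring
      exact (tendsto_atTop_add_const_left atTop 1 l2).comp Real.tendsto_log_atTop
    -- the two limit functions
    have hf1 : Tendsto (fun x : ℝ => Real.log (1 + ξ₂ * (x - μ₂)/σ₂) / Real.log x)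
        atTop (𝓝 1) := by
      have h := log_linear_div (ξ₂/σ₂) (1 - ξ₂*μ₂/σ₂) (div_pos hξ₂ hσ₂)
      refine h.congr fun x => ?_
      rw [show ξ₂/σ₂*x + (1 - ξ₂*μ₂/σ₂) = 1 + ξ₂ * (x - μ₂)/σ₂ from by field_simp; ring]
    have hg0 : Tendsto (fun x : ℝ =>
        ξ₂/ξ * (Real.log (1 + ξ * (Real.log x - μ)/σ) / Real.log x)) atTop (𝓝 0) := by
      have h := (log_loglinear_div (ξ/σ) (1 - ξ*μ/σ) (div_pos hξp hσ)).const_mul (ξ₂/ξ)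
      rw [mul_zero] at h
      refine h.congr fun x => ?_
      rw [show ξ/σ*Real.log x + (1 - ξ*μ/σ) = 1 + ξ * (Real.log x - μ)/σ from by
        field_simp; ring]
    have heq : (fun x : ℝ => Real.log (1 + ξ₂ * (x - μ₂)/σ₂) / Real.log x)
        =ᶠ[atTop] (fun x : ℝ =>
          ξ₂/ξ * (Real.log (1 + ξ * (Real.log x - μ)/σ) / Real.log x)) := by
      filter_upwards [eventually_gt_atTop 1, hA2top.eventually_gt_atTop 0,
        hBtop.eventually_gt_atTop 0] with x hx1 hA2 hB
      have hx : (0:ℝ) < x := lt_trans one_pos hx1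
      have h1 := hpt x hx
      have h2 := hstar x⁻¹ (inv_pos.mpr hx)
      rw [Real.log_inv, neg_neg] at h2
      have h3 : GEVcdf ξ₂ μ₂ σ₂ x = GEVcdf ξ μ σ (Real.log x) := h1.symm.trans h2
      rw [gev_pos_branch (ne_of_gt hξ₂) hA2, gev_pos_branch hξ hB] at h3
      have h4 : (1 + ξ₂*(x-μ₂)/σ₂) ^ (-1/ξ₂) = (1 + ξ*(Real.log x - μ)/σ) ^ (-1/ξ) :=
        neg_injective (Real.exp_eq_exp.mp h3)
      have h5 : (-1/ξ₂) * Real.log (1 + ξ₂*(x-μ₂)/σ₂)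
          = (-1/ξ) * Real.log (1 + ξ*(Real.log x - μ)/σ) := by
        rw [← Real.log_rpow hA2, ← Real.log_rpow hB, h4]
      have hlx : Real.log x ≠ 0 := ne_of_gt (Real.log_pos hx1)
      have hξ₂' : ξ₂ ≠ 0 := ne_of_gt hξ₂
      field_simp at h5 ⊢
      linear_combination (-1 : ℝ) * h5
    have hcontra := tendsto_nhds_unique hf1 (hg0.congr' heq.symm)
    norm_num at hcontra
  have hξeq : ξ = 0 := le_antisymm (not_lt.1 hξnpos) hξ0
  subst hξeq
  refine ⟨Real.exp μ, σ, Real.exp_pos μ, hσ, ?_⟩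
  intro t ht
  rcases eq_or_lt_of_le ht with hteq | htpos
  · rw [← hteq]
    rw [mul_zero, Real.zero_rpow (by positivity : (1:ℝ)/σ ≠ 0)]
    simpa using hψ0
  · rw [hstar t htpos, gev_zero_branch]
    congr 1
    rw [neg_inj]
    rw [Real.rpow_def_of_pos (by positivity), Real.log_mul (Real.exp_ne_zero μ)
      (ne_of_gt htpos), Real.log_exp]
    congr 1
    field_simp
    ring

end AuxLemmas

/-- Lemma: `ψ(−log H)` is GEV for every GEV `H` iff `ψ(t) = exp(−(ct)^{1/θ})`. -/
theorem archimedean_GEV_limit_characterization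
    (ψ : ℝ → ℝ)
    (hψ : IsArchimedeanGenerator ψ) (hψconvex : ConvexOn ℝ (Ici 0) ψ) :
    (∀ H : ℝ → ℝ, IsGEV H →
      IsGEV (fun x => if H x = 0 then 0 else ψ (-Real.log (H x)))) ↔
    ∃ c θ : ℝ, 0 < c ∧ 1 ≤ θ ∧ ∀ t : ℝ, 0 ≤ t → ψ t = Real.exp (-((c * t) ^ (1 / θ))) := by
  constructor
  · intro hyp
    obtain ⟨c, σ, hc, hσ, hform⟩ := mp_dir ψ hψ hyp
    exact ⟨c, σ, hc, theta_ge_one ψ c σ hc hσ hform hψconvex, hform⟩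
  · rintro ⟨c, θ, hc, hθ, hform⟩
    exact mpr_dir ψ c θ hc hθ hform
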